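/- arXiv:1704.03641 — 8 statements merged into one kernel-verified Lean document; each statement's English description precedes it below -/
import Mathlib

section
/- Under the equilibrium of a system (m,n,μ), the elasticities of the equilibrium throughput λ(m,n,μ) = m·n·ρ(φ(m,n,μ)) with respect to m and with respect to n are equal, and both equal ε^λ = (1 + (m·n·|dρ/dφ|)/(∂Λ/∂φ))⁻¹, which lies in the interval (0,1]. -/
/-- At equilibrium, the elasticities of throughput `λ = m·n·ρ(φ(m,n))` with
respect to `m` and `n` coincide and equal `(1 + m·n·|dρ/dφ|/(∂Λ/∂φ))⁻¹ ∈ (0,1]`. -/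
theorem elasticity_of_throughput
    (Λ ρ : ℝ → ℝ) (φ : ℝ → ℝ → ℝ) (m n Λ' ρ' dφm dφn lamM lamN : ℝ)
    (hm : 0 < m) (hn : 0 < n)
    (hρpos : 0 < ρ (φ m n))
    (heq : ∀ a b, Λ (φ a b) = a * b * ρ (φ a b))
    (hΛ : HasDerivAt Λ Λ' (φ m n))
    (hρ : HasDerivAt ρ ρ' (φ m n))
    (hΛ' : 0 < Λ') (hρ' : ρ' < 0)
    (hφm : HasDerivAt (fun a => φ a n) dφm m)
    (hφn : HasDerivAt (fun b => φ m b) dφn n)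
    (hlamM : HasDerivAt (fun a => a * n * ρ (φ a n)) lamM m)
    (hlamN : HasDerivAt (fun b => m * b * ρ (φ m b)) lamN n) :
    |m / (m * n * ρ (φ m n)) * lamM| = |n / (m * n * ρ (φ m n)) * lamN| ∧
    |m / (m * n * ρ (φ m n)) * lamM| = (1 + m * n * |ρ'| / Λ')⁻¹ ∧
    0 < (1 + m * n * |ρ'| / Λ')⁻¹ ∧ (1 + m * n * |ρ'| / Λ')⁻¹ ≤ 1 := by
  set r := ρ (φ m n) with hr
  have hD : 0 < Λ' - m * n * ρ' := by
    have := mul_neg_of_pos_of_neg (mul_pos hm hn) hρ'; linarith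
  -- derivative of Λ ∘ φ in m
  have h1 : HasDerivAt (fun a => Λ (φ a n)) (Λ' * dφm) m := hΛ.comp m hφm
  have h1' : HasDerivAt (fun a => a * n * ρ (φ a n)) (Λ' * dφm) m := by
    have : (fun a => Λ (φ a n)) = fun a => a * n * ρ (φ a n) := funext fun a => heq a n
    rwa [this] at h1
  have h3 : HasDerivAt (fun a => a * n * ρ (φ a n)) (1 * n * r + m * n * (ρ' * dφm)) m :=
    ((hasDerivAt_id m).mul_const n).mul (hρ.comp m hφm)
  have e1 : lamM = Λ' * dφm := hlamM.unique h1'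
  have e2 : lamM = n * r + m * n * (ρ' * dφm) := by
    have := hlamM.unique h3; linarith [this]
  have hdφm : dφm = n * r / (Λ' - m * n * ρ') := by
    rw [eq_div_iff hD.ne']
    nlinarith [e1, e2]
  -- same for n
  have h1n : HasDerivAt (fun b => Λ (φ m b)) (Λ' * dφn) n := hΛ.comp n hφn
  have h1n' : HasDerivAt (fun b => m * b * ρ (φ m b)) (Λ' * dφn) n := by
    have : (fun b => Λ (φ m b)) = fun b => m * b * ρ (φ m b) := funext fun b => heq m b
    rwa [this] at h1n
  have h3n : HasDerivAt (fun b => m * b * ρ (φ m b)) (m * 1 * r + m * n * (ρ' * dφn)) n := by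
    have := ((hasDerivAt_id n).const_mul m).mul (hρ.comp n hφn)
    exact this.congr_deriv (by simp only [id_eq, Function.comp_apply, hr])
  have e1n : lamN = Λ' * dφn := hlamN.unique h1n'
  have e2n : lamN = m * r + m * n * (ρ' * dφn) := by
    have := hlamN.unique h3n; linarith [this]
  have hdφn : dφn = m * r / (Λ' - m * n * ρ') := by
    field_simp
    nlinarith [e1n, e2n]
  have hmnr : 0 < m * n * r := by positivity
  have hEm : m / (m * n * r) * lamM = Λ' / (Λ' - m * n * ρ') := by
    rw [e1, hdφm]; field_simp
  have hEn : n / (m * n * r) * lamN = Λ' / (Λ' - m * n * ρ') := by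
    rw [e1n, hdφn]; field_simp
  have habs : |ρ'| = -ρ' := abs_of_neg hρ'
  have hinv : (1 + m * n * |ρ'| / Λ')⁻¹ = Λ' / (Λ' - m * n * ρ') := by
    rw [habs, show 1 + m * n * -ρ' / Λ' = (Λ' - m * n * ρ') / Λ' from by field_simp; ring, inv_div]
  refine ⟨by rw [hEm, hEn], by rw [hEm, hinv, abs_of_pos (div_pos hΛ' hD)], ?_, ?_⟩
  · rw [hinv]; positivity
  · rw [hinv, div_le_one hD]; nlinarith
end

section
/- Let the user-side demand be m(p) with hazard rate m̃^p = −m'(p)/m(p) > 0, and the CP-side demand n(q) with hazard rate ñ^q = −n'(q)/n(q) > 0. Then at the congestion equilibrium with fixed capacity, ∂φ/∂p = −(∂g/∂φ)⁻¹·λ·m̃^p < 0 and ∂λ/∂p = (∂Λ/∂φ)·(∂φ/∂p) < 0, i.e., raising the user-side price strictly decreases both equilibrium congestion and equilibrium throughput. -/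
/-- Raising the user-side price strictly decreases both equilibrium congestion
and equilibrium throughput:
`∂φ/∂p = −(∂g/∂φ)⁻¹·λ·m̃ᵖ < 0` and `∂λ/∂p = (∂Λ/∂φ)·(∂φ/∂p) < 0`. -/
theorem price_decreases_congestion_and_throughput
    (Λ ρ mdem φeq : ℝ → ℝ) (nq p m' Λ' ρ' dφp lamP : ℝ)
    (hmpos : 0 < mdem p) (hnq : 0 < nq) (hρpos : 0 < ρ (φeq p))
    (hm : HasDerivAt mdem m' p) (hm' : m' < 0)
    (heq : ∀ x, Λ (φeq x) = mdem x * nq * ρ (φeq x))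
    (hΛ : HasDerivAt Λ Λ' (φeq p))
    (hρ : HasDerivAt ρ ρ' (φeq p))
    (hΛ' : 0 < Λ') (hρ'neg : ρ' < 0)
    (hφ : HasDerivAt φeq dφp p)
    (hlamP : HasDerivAt (fun x => mdem x * nq * ρ (φeq x)) lamP p) :
    dφp = -(Λ' - mdem p * nq * ρ')⁻¹ * (mdem p * nq * ρ (φeq p)) * (-m' / mdem p) ∧
    dφp < 0 ∧ lamP = Λ' * dφp ∧ lamP < 0 := by
  have hcomp : HasDerivAt (fun x => Λ (φeq x)) (Λ' * dφp) p := hΛ.comp p hφ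
  have hfun : (fun x => Λ (φeq x)) = fun x => mdem x * nq * ρ (φeq x) := funext heq
  have hlam_eq : lamP = Λ' * dφp := hlamP.unique (hfun ▸ hcomp)
  have hrhs : HasDerivAt (fun x => mdem x * nq * ρ (φeq x))
      (m' * nq * ρ (φeq p) + mdem p * nq * (ρ' * dφp)) p :=
    (hm.mul_const nq).mul (hρ.comp p hφ)
  have hkey : Λ' * dφp = m' * nq * ρ (φeq p) + mdem p * nq * (ρ' * dφp) := by
    rw [← hlam_eq]; exact hlamP.unique hrhs
  have hD : 0 < Λ' - mdem p * nq * ρ' := by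
    have := mul_neg_of_pos_of_neg (mul_pos hmpos hnq) hρ'neg
    linarith
  have hdφ : dφp = (m' * nq * ρ (φeq p)) / (Λ' - mdem p * nq * ρ') := by
    rw [eq_div_iff hD.ne']
    linarith [hkey]
  have hnum : m' * nq * ρ (φeq p) < 0 :=
    mul_neg_of_neg_of_pos (mul_neg_of_neg_of_pos hm' hnq) hρpos
  have hdφneg : dφp < 0 := by
    rw [hdφ]; exact div_neg_of_neg_of_pos hnum hD
  refine ⟨?_, hdφneg, hlam_eq, ?_⟩
  · rw [hdφ]; field_simp
  · rw [hlam_eq]; exact mul_neg_of_pos_of_neg hΛ' hdφneg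
end

section
/- At the congestion equilibrium with fixed capacity, the ratio of price elasticities of throughput equals the ratio of price elasticities of demand: ε_p^λ : ε_q^λ = ε_p^m : ε_q^n, where ε_p^λ = |(p/λ)(∂λ/∂p)|, ε_q^λ = |(q/λ)(∂λ/∂q)|, ε_p^m = |(p/m)·m'(p)|, ε_q^n = |(q/n)·n'(q)|. -/
/-- At equilibrium, the price elasticities of throughput are in the same ratio as
the price elasticities of demand: `ε_p^λ : ε_q^λ = ε_p^m : ε_q^n`
(stated in cross-multiplied form). -/
theorem elasticity_ratio_prices
    (Λ ρ mdem ndem : ℝ → ℝ) (φ : ℝ → ℝ → ℝ)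
    (p q m' n' Λ' ρ' dφp dφq lamP lamQ : ℝ)
    (hp : 0 < p) (hq : 0 < q)
    (hmpos : 0 < mdem p) (hnpos : 0 < ndem q) (hρpos : 0 < ρ (φ p q))
    (hm : HasDerivAt mdem m' p) (hm' : m' < 0)
    (hn : HasDerivAt ndem n' q) (hn' : n' < 0)
    (heq : ∀ x y, Λ (φ x y) = mdem x * ndem y * ρ (φ x y))
    (hΛ : HasDerivAt Λ Λ' (φ p q))
    (hρ : HasDerivAt ρ ρ' (φ p q))
    (hΛ' : 0 < Λ') (hρ'neg : ρ' < 0)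
    (hφp : HasDerivAt (fun x => φ x q) dφp p)
    (hφq : HasDerivAt (fun y => φ p y) dφq q)
    (hlamP : HasDerivAt (fun x => mdem x * ndem q * ρ (φ x q)) lamP p)
    (hlamQ : HasDerivAt (fun y => mdem p * ndem y * ρ (φ p y)) lamQ q) :
    |p / (mdem p * ndem q * ρ (φ p q)) * lamP| * |q / ndem q * n'| =
    |q / (mdem p * ndem q * ρ (φ p q)) * lamQ| * |p / mdem p * m'| := by
  set M := mdem p
  set N := ndem q
  set R := ρ (φ p q)
  -- derivative of Λ ∘ φ in each variable
  have hcompP : HasDerivAt (fun x => Λ (φ x q)) (Λ' * dφp) p := hΛ.comp p hφp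
  have hcompQ : HasDerivAt (fun y => Λ (φ p y)) (Λ' * dφq) q := hΛ.comp q hφq
  have hfunP : (fun x => Λ (φ x q)) = (fun x => mdem x * ndem q * ρ (φ x q)) := by
    funext x; exact heq x q
  have hfunQ : (fun y => Λ (φ p y)) = (fun y => mdem p * ndem y * ρ (φ p y)) := by
    funext y; exact heq p y
  rw [hfunP] at hcompP
  rw [hfunQ] at hcompQ
  have hlPeq : lamP = Λ' * dφp := hlamP.unique hcompP
  have hlQeq : lamQ = Λ' * dφq := hlamQ.unique hcompQ
  -- product-rule expressions
  have hprodP : HasDerivAt (fun x => mdem x * ndem q * ρ (φ x q))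
      (m' * ndem q * R + (M * N) * (ρ' * dφp)) p :=
    (hm.mul_const (ndem q)).mul (hρ.comp p hφp)
  have hprodQ : HasDerivAt (fun y => mdem p * ndem y * ρ (φ p y))
      (M * n' * R + (M * N) * (ρ' * dφq)) q := by
    have h := ((hasDerivAt_const q M).mul hn).mul (hρ.comp q hφq)
    exact h.congr_deriv (by simp [Function.comp]; rfl)
  have hP2 : lamP = m' * N * R + (M * N) * (ρ' * dφp) := hlamP.unique hprodP
  have hQ2 : lamQ = M * n' * R + (M * N) * (ρ' * dφq) := hlamQ.unique hprodQ
  set D := Λ' - M * N * ρ' with hD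
  have hDpos : 0 < D := by
    have : M * N * ρ' < 0 := mul_neg_of_pos_of_neg (mul_pos hmpos hnpos) hρ'neg
    linarith
  have hdφp : dφp * D = m' * N * R := by
    have := hlPeq.symm.trans hP2
    rw [hD]; nlinarith [this]
  have hdφq : dφq * D = M * n' * R := by
    have := hlQeq.symm.trans hQ2
    rw [hD]; nlinarith [this]
  -- key cross equality
  have key : lamP * n' * M = lamQ * m' * N := by
    have h1 : lamP * n' * M * D = lamQ * m' * N * D := by
      rw [hlPeq, hlQeq]
      calc Λ' * dφp * n' * M * D = Λ' * n' * M * (dφp * D) := by ring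
        _ = Λ' * n' * M * (m' * N * R) := by rw [hdφp]
        _ = Λ' * m' * N * (dφq * D) := by rw [hdφq]; ring
        _ = Λ' * dφq * m' * N * D := by ring
    exact mul_right_cancel₀ (ne_of_gt hDpos) h1
  rw [← abs_mul, ← abs_mul, abs_eq_abs]
  left
  have hM := hmpos.ne'
  have hN := hnpos.ne'
  have hR := hρpos.ne'
  field_simp
  linear_combination key
end

section
/- At equilibrium, the partial derivatives of profit with respect to the two prices are ∂U/∂p = λ − (p+q−c)·ε^λ·λ·m̃^p and ∂U/∂q = λ − (p+q−c)·ε^λ·λ·ñ^q, where m̃^p = −m'(p)/m(p), ñ^q = −n'(q)/n(q), and ε^λ is the elasticity of equilibrium throughput. -/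
/-- Partial derivatives of profit in the two prices:
`∂U/∂p = λ − (p+q−c)·ε^λ·λ·m̃ᵖ` and `∂U/∂q = λ − (p+q−c)·ε^λ·λ·ñ^q`. -/
theorem profit_partials_in_prices
    (Λ ρ mdem ndem : ℝ → ℝ) (φ : ℝ → ℝ → ℝ)
    (p q c m' n' Λ' ρ' dφp dφq Up Uq : ℝ)
    (hmpos : 0 < mdem p) (hnpos : 0 < ndem q) (hρpos : 0 < ρ (φ p q))
    (hm : HasDerivAt mdem m' p) (hm' : m' < 0)
    (hn : HasDerivAt ndem n' q) (hn' : n' < 0)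
    (heq : ∀ x y, Λ (φ x y) = mdem x * ndem y * ρ (φ x y))
    (hΛ : HasDerivAt Λ Λ' (φ p q))
    (hρ : HasDerivAt ρ ρ' (φ p q))
    (hΛ' : 0 < Λ') (hρ'neg : ρ' < 0)
    (hφp : HasDerivAt (fun x => φ x q) dφp p)
    (hφq : HasDerivAt (fun y => φ p y) dφq q)
    (hUp : HasDerivAt (fun x => (x + q - c) * (mdem x * ndem q * ρ (φ x q))) Up p)
    (hUq : HasDerivAt (fun y => (p + y - c) * (mdem p * ndem y * ρ (φ p y))) Uq q) :
    Up = mdem p * ndem q * ρ (φ p q) -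
        (p + q - c) * (1 + mdem p * ndem q * |ρ'| / Λ')⁻¹ *
          (mdem p * ndem q * ρ (φ p q)) * (-m' / mdem p) ∧
    Uq = mdem p * ndem q * ρ (φ p q) -
        (p + q - c) * (1 + mdem p * ndem q * |ρ'| / Λ')⁻¹ *
          (mdem p * ndem q * ρ (φ p q)) * (-n' / ndem q) := by
  have habs : |ρ'| = -ρ' := abs_of_neg hρ'neg
  have hK : 0 < Λ' - mdem p * ndem q * ρ' := by nlinarith [mul_pos hmpos hnpos]
  have hKne : Λ' - mdem p * ndem q * ρ' ≠ 0 := ne_of_gt hK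
  have hΛne : Λ' ≠ 0 := ne_of_gt hΛ'
  have hmne : mdem p ≠ 0 := ne_of_gt hmpos
  have hnne : ndem q ≠ 0 := ne_of_gt hnpos
  -- p-direction
  have hlp : HasDerivAt (fun x => mdem x * ndem q * ρ (φ x q))
      (m' * ndem q * ρ (φ p q) + mdem p * ndem q * (ρ' * dφp)) p :=
    (hm.mul_const (ndem q)).mul (hρ.comp p hφp)
  have hΛp : HasDerivAt (fun x => mdem x * ndem q * ρ (φ x q)) (Λ' * dφp) p := by
    have := hΛ.comp p hφp
    have hfe : (fun x => Λ (φ x q)) = fun x => mdem x * ndem q * ρ (φ x q) := by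
      funext x; exact heq x q
    rwa [show (Λ ∘ fun x => φ x q) = fun x => Λ (φ x q) from rfl, hfe] at this
  have keyp : Λ' * dφp = m' * ndem q * ρ (φ p q) + mdem p * ndem q * (ρ' * dφp) :=
    hΛp.unique hlp
  have hUp2 : HasDerivAt (fun x => (x + q - c) * (mdem x * ndem q * ρ (φ x q)))
      (1 * (mdem p * ndem q * ρ (φ p q)) + (p + q - c) * (Λ' * dφp)) p :=
    (((hasDerivAt_id p).add_const q).sub_const c).mul hΛp
  have hUpval := hUp.unique hUp2
  -- q-direction
  have hlq : HasDerivAt (fun y => mdem p * ndem y * ρ (φ p y))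
      (mdem p * n' * ρ (φ p q) + mdem p * ndem q * (ρ' * dφq)) q :=
    (hn.const_mul (mdem p)).mul (hρ.comp q hφq)
  have hΛq : HasDerivAt (fun y => mdem p * ndem y * ρ (φ p y)) (Λ' * dφq) q := by
    have := hΛ.comp q hφq
    have hfe : (fun y => Λ (φ p y)) = fun y => mdem p * ndem y * ρ (φ p y) := by
      funext y; exact heq p y
    rwa [show (Λ ∘ fun y => φ p y) = fun y => Λ (φ p y) from rfl, hfe] at this
  have keyq : Λ' * dφq = mdem p * n' * ρ (φ p q) + mdem p * ndem q * (ρ' * dφq) :=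
    hΛq.unique hlq
  have hUq2 : HasDerivAt (fun y => (p + y - c) * (mdem p * ndem y * ρ (φ p y)))
      (1 * (mdem p * ndem q * ρ (φ p q)) + (p + q - c) * (Λ' * dφq)) q := by
    have hlin : HasDerivAt (fun y : ℝ => p + y - c) 1 q :=
      ((hasDerivAt_id q).const_add p).sub_const c
    exact hlin.mul hΛq
  have hUqval := hUq.unique hUq2
  rw [habs]
  constructor
  · have e1 : (1 + mdem p * ndem q * -ρ' / Λ')⁻¹ = Λ' / (Λ' - mdem p * ndem q * ρ') := by
      have hbase : 1 + mdem p * ndem q * -ρ' / Λ' = (Λ' - mdem p * ndem q * ρ') / Λ' := by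
        field_simp; ring
      rw [hbase, inv_div]
    have hdφp : dφp = m' * ndem q * ρ (φ p q) / (Λ' - mdem p * ndem q * ρ') := by
      rw [eq_div_iff hKne]
      linarith [keyp]
    rw [hUpval, e1, hdφp]
    field_simp
    ring
  · have e1 : (1 + mdem p * ndem q * -ρ' / Λ')⁻¹ = Λ' / (Λ' - mdem p * ndem q * ρ') := by
      have hbase : 1 + mdem p * ndem q * -ρ' / Λ' = (Λ' - mdem p * ndem q * ρ') / Λ' := by
        field_simp; ring
      rw [hbase, inv_div]
    have hdφq : dφq = mdem p * n' * ρ (φ p q) / (Λ' - mdem p * ndem q * ρ') := by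
      rw [eq_div_iff hKne]
      linarith [keyq]
    rw [hUqval, e1, hdφq]
    field_simp
    ring
end

section
/- Social welfare W(p,q,μ) = (s_m(p) + s_n(q))·λ(p,q,μ) evaluated at equilibrium satisfies ∂W/∂p = −λ − m̃^p·[W_n − W(1−ε^λ)] and ∂W/∂q = −λ − ñ^q·[W_m − W(1−ε^λ)], where W_m = s_m·λ, W_n = s_n·λ. -/
/-- Partial derivatives of social welfare `W = (s_m + s_n)·λ`:
`∂W/∂p = −λ − m̃ᵖ·[W_n − W(1−ε^λ)]` and `∂W/∂q = −λ − ñ^q·[W_m − W(1−ε^λ)]`. -/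
theorem welfare_partials
    (sm sn : ℝ → ℝ) (lam : ℝ → ℝ → ℝ) (p q epsL mt nt : ℝ)
    (hsm : HasDerivAt sm (sm p * mt - 1) p)
    (hsn : HasDerivAt sn (sn q * nt - 1) q)
    (hlp : HasDerivAt (fun x => lam x q) (-(lam p q) * epsL * mt) p)
    (hlq : HasDerivAt (fun y => lam p y) (-(lam p q) * epsL * nt) q) :
    HasDerivAt (fun x => (sm x + sn q) * lam x q)
      (-(lam p q) - mt * (sn q * lam p q - (sm p + sn q) * lam p q * (1 - epsL))) p ∧
    HasDerivAt (fun y => (sm p + sn y) * lam p y)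
      (-(lam p q) - nt * (sm p * lam p q - (sm p + sn q) * lam p q * (1 - epsL))) q := by
  constructor
  · have h : HasDerivAt (fun x => (sm x + sn q) * lam x q)
        ((sm p * mt - 1) * lam p q + (sm p + sn q) * (-(lam p q) * epsL * mt)) p :=
      ((hsm.add_const (sn q)).mul hlp)
    convert h using 1
    ring
  · have h : HasDerivAt (fun y => (sm p + sn y) * lam p y)
        ((0 + (sn q * nt - 1)) * lam p q + (sm p + sn q) * (-(lam p q) * epsL * nt)) q :=
      (((hasDerivAt_const q (sm p)).add hsn).mul hlq)
    convert h using 1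
    ring
end

section
/- If prices (p,q) maximize social welfare W(p,q,μ) = W_m + W_n subject to the zero-profit constraint p+q = c (interior maximum), then the demand hazard rates satisfy the proportionality m̃^p : ñ^q = (ε^λ − 1 + s_m/(s_m+s_n)) : (ε^λ − 1 + s_n/(s_m+s_n)). -/
/-- At a welfare optimum subject to the zero-profit constraint `p+q=c`, the
demand hazard rates satisfy
`m̃ᵖ : ñ^q = (ε^λ−1+s_m/(s_m+s_n)) : (ε^λ−1+s_n/(s_m+s_n))`. -/
theorem welfare_optimal_hazard_ratio
    (Wc : ℝ → ℝ) (p q c lam epsL mt nt sm sn : ℝ)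
    (hlam : 0 < lam) (hsm : 0 < sm) (hsn : 0 < sn)
    (hpq : p + q = c)
    (hW' : HasDerivAt Wc
      ((-lam - mt * (sn * lam - (sm + sn) * lam * (1 - epsL))) -
        (-lam - nt * (sm * lam - (sm + sn) * lam * (1 - epsL)))) p)
    (hmax : IsLocalMax Wc p) :
    mt * (epsL - 1 + sn / (sm + sn)) = nt * (epsL - 1 + sm / (sm + sn)) := by
  have h0 := hmax.hasDerivAt_eq_zero hW'
  have hs : sm + sn ≠ 0 := by positivity
  have hl : lam ≠ 0 := ne_of_gt hlam
  have key : mt * (sn * lam - (sm + sn) * lam * (1 - epsL)) =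
      nt * (sm * lam - (sm + sn) * lam * (1 - epsL)) := by linarith
  field_simp
  nlinarith [key, sq_nonneg lam, mul_pos hsm hsn]
end

section
/- If the congestion function is Φ(λ,μ) = λ/μ (so Λ(φ,μ) = φμ), then the elasticity of equilibrium system throughput satisfies ε^λ = 1/(1 + ε_φ^ρ) ∈ (0,1], where ε_φ^ρ = |(φ/ρ)·(dρ/dφ)| is the congestion elasticity of the throughput gain, evaluated at the equilibrium congestion φ. -/
/-- For capacity sharing `Λ(φ,μ)=φμ` and equilibrium `φμ = m·n·ρ(φ)`,
the elasticity of throughput satisfies `ε^λ = 1/(1+ε_φ^ρ) ∈ (0,1]`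
where `ε_φ^ρ = |(φ/ρ)·ρ'|`. -/
theorem capacity_sharing_elasticity
    (ρ : ℝ → ℝ) (m n μ φ ρ' : ℝ)
    (hm : 0 < m) (hn : 0 < n) (hμ : 0 < μ) (hφ : 0 < φ)
    (hρpos : 0 < ρ φ)
    (hρ : HasDerivAt ρ ρ' φ) (hρ' : ρ' < 0)
    (heq : φ * μ = m * n * ρ φ) :
    (1 + m * n * |ρ'| / μ)⁻¹ = 1 / (1 + |φ / ρ φ * ρ'|) ∧
    0 < (1 + m * n * |ρ'| / μ)⁻¹ ∧ (1 + m * n * |ρ'| / μ)⁻¹ ≤ 1 := by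
  have key : m * n * |ρ'| / μ = |φ / ρ φ * ρ'| := by
    rw [abs_mul, abs_of_pos (div_pos hφ hρpos)]
    field_simp
    nlinarith [abs_nonneg ρ']
  have h0 : 0 ≤ m * n * |ρ'| / μ := by positivity
  refine ⟨by rw [key, one_div], inv_pos.mpr (by linarith), ?_⟩
  rw [inv_le_one_iff₀]
  right; linarith
end

section
/- For the M/M/1 congestion function Φ(λ,μ) = 1/(μ−λ) with inverse Λ(φ,μ) = μ − 1/φ, the elasticity of equilibrium throughput is ε^λ(φ) = 1/(1 + m·n·G(φ)), where G(φ) = −φ²·dρ/dφ > 0. In particular, if G is increasing in φ (which holds whenever ρ is concavely decreasing, i.e., d²ρ/dφ² < 0 and dρ/dφ < 0), then ε^λ is strictly decreasing in φ. -/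
/-- For the M/M/1 congestion function (`Λ(φ,μ)=μ−1/φ`, so `∂Λ/∂φ = 1/φ²`),
the elasticity of throughput is `ε^λ(φ) = 1/(1+m·n·G(φ))` with
`G(φ) = −φ²·ρ'(φ) > 0`; moreover if `G` is increasing then `ε^λ` is strictly
decreasing, and `G` is increasing whenever `ρ'' < 0` and `ρ' < 0` on `(0,∞)`. -/
theorem mm1_elasticity
    (ρ ρ' ρ'' : ℝ → ℝ) (m n : ℝ)
    (hm : 0 < m) (hn : 0 < n)
    (h1 : ∀ φ > (0:ℝ), HasDerivAt ρ (ρ' φ) φ)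
    (h2 : ∀ φ > (0:ℝ), HasDerivAt ρ' (ρ'' φ) φ)
    (hneg : ∀ φ > (0:ℝ), ρ' φ < 0) :
    (∀ φ > (0:ℝ),
      (1 + m * n * |ρ' φ| / (1 / φ ^ 2))⁻¹ = 1 / (1 + m * n * (-(φ ^ 2) * ρ' φ)) ∧
      0 < -(φ ^ 2) * ρ' φ) ∧
    (StrictMonoOn (fun φ => -(φ ^ 2) * ρ' φ) (Set.Ioi 0) →
      StrictAntiOn (fun φ => (1 + m * n * |ρ' φ| / (1 / φ ^ 2))⁻¹) (Set.Ioi 0)) ∧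
    ((∀ φ > (0:ℝ), ρ'' φ < 0) →
      StrictMonoOn (fun φ => -(φ ^ 2) * ρ' φ) (Set.Ioi 0)) := by
  have key : ∀ φ > (0:ℝ),
      (1 + m * n * |ρ' φ| / (1 / φ ^ 2))⁻¹ = 1 / (1 + m * n * (-(φ ^ 2) * ρ' φ)) ∧
      0 < -(φ ^ 2) * ρ' φ := by
    intro φ hφ
    have hne : (φ:ℝ) ^ 2 ≠ 0 := by positivity
    have habs : |ρ' φ| = -ρ' φ := abs_of_neg (hneg φ hφ)
    constructor
    · rw [one_div, habs]
      congr 1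
      field_simp
    · have := hneg φ hφ
      nlinarith [sq_nonneg φ, pow_pos hφ 2]
  refine ⟨key, ?_, ?_⟩
  · intro hG a ha b hb hab
    have ha' : (0:ℝ) < a := ha
    have hb' : (0:ℝ) < b := hb
    have h1a := (key a ha').1
    have h1b := (key b hb').1
    simp only [h1a, h1b]
    have hGa := (key a ha').2
    have hGb := (key b hb').2
    have hlt : m * n * (-(a ^ 2) * ρ' a) < m * n * (-(b ^ 2) * ρ' b) := by
      have := hG ha hb hab
      exact mul_lt_mul_of_pos_left this (by positivity)
    have hpa : 0 < 1 + m * n * (-(a ^ 2) * ρ' a) := by positivity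
    apply one_div_lt_one_div_of_lt hpa
    linarith
  · intro hcc
    have hconv : Convex ℝ (Set.Ioi (0:ℝ)) := convex_Ioi 0
    apply StrictMonoOn.mono (s := Set.Ioi (0:ℝ)) ?_ le_rfl
    apply strictMonoOn_of_deriv_pos hconv
    · intro x hx
      have hx' : (0:ℝ) < x := hx
      exact ((((hasDerivAt_pow 2 x).neg).mul (h2 x hx')).continuousAt).continuousWithinAt
    · intro x hx
      rw [interior_Ioi] at hx
      have hx' : (0:ℝ) < x := hx
      have hd : HasDerivAt (fun φ => -(φ ^ 2) * ρ' φ)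
          (-(2 * x) * ρ' x + -(x ^ 2) * ρ'' x) x := by
        have := ((hasDerivAt_pow 2 x).neg).mul (h2 x hx')
        refine this.congr_deriv ?_
        simp only [Pi.neg_apply]
        norm_num
      rw [hd.deriv]
      have h3 := hneg x hx'
      have h4 := hcc x hx'
      nlinarith
end
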